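/- For every continuously differentiable matrix field P : ℝ³ → ℝ³ˣ³, one has sym Curl P = sym Curl (dev P) at every point of ℝ³, where dev P = P − (tr P/3)·𝟙 is the pointwise deviatoric (trace-free) part of P. -/

import Mathlib

/-- Partial derivative ∂ⱼ of a scalar field on ℝ³. -/
noncomputable def pd (j : Fin 3) (f : (Fin 3 → ℝ) → ℝ) (x : Fin 3 → ℝ) : ℝ :=
  fderiv ℝ f x (Pi.single j 1)

/-- curl of a vector field on ℝ³. -/
noncomputable def vcurl (v : (Fin 3 → ℝ) → (Fin 3 → ℝ)) (x : Fin 3 → ℝ) : Fin 3 → ℝ :=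
  ![pd 1 (fun y => v y 2) x - pd 2 (fun y => v y 1) x,
    pd 2 (fun y => v y 0) x - pd 0 (fun y => v y 2) x,
    pd 0 (fun y => v y 1) x - pd 1 (fun y => v y 0) x]

/-- divergence of a vector field on ℝ³. -/
noncomputable def vdiv (v : (Fin 3 → ℝ) → (Fin 3 → ℝ)) (x : Fin 3 → ℝ) : ℝ :=
  pd 0 (fun y => v y 0) x + pd 1 (fun y => v y 1) x + pd 2 (fun y => v y 2) x

/-- Row-wise matrix Curl of a matrix field on ℝ³. -/
noncomputable def MCurl (P : (Fin 3 → ℝ) → Fin 3 → Fin 3 → ℝ) (x : Fin 3 → ℝ) :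
    Fin 3 → Fin 3 → ℝ :=
  fun i => vcurl (fun y => P y i) x

/-- Row-wise matrix divergence of a matrix field on ℝ³. -/
noncomputable def MDiv (P : (Fin 3 → ℝ) → Fin 3 → Fin 3 → ℝ) (x : Fin 3 → ℝ) : Fin 3 → ℝ :=
  fun i => vdiv (fun y => P y i) x

/-- Symmetric part of a 3×3 matrix (as a function). -/
noncomputable def msym (M : Fin 3 → Fin 3 → ℝ) : Fin 3 → Fin 3 → ℝ :=
  fun i j => (M i j + M j i) / 2

/-- Trace of a 3×3 matrix (as a function). -/
def mtrace (M : Fin 3 → Fin 3 → ℝ) : ℝ := M 0 0 + M 1 1 + M 2 2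

/-- Deviatoric (trace-free) part of a 3×3 matrix. -/
noncomputable def mdev (M : Fin 3 → Fin 3 → ℝ) : Fin 3 → Fin 3 → ℝ :=
  fun i j => M i j - (mtrace M / 3) * (if i = j then 1 else 0)

lemma pd_sub (f g : (Fin 3 → ℝ) → ℝ) (x : Fin 3 → ℝ) (k : Fin 3)
    (hf : Differentiable ℝ f) (hg : Differentiable ℝ g) :
    pd k (fun y => f y - g y) x = pd k f x - pd k g x := by
  unfold pd
  rw [fderiv_fun_sub (hf x) (hg x)]
  rfl

/-- For every C¹ matrix field `P : ℝ³ → ℝ³ˣ³`, `sym (Curl P) = sym (Curl (dev P))`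
at every point. -/
theorem symCurl_eq_symCurl_dev (P : (Fin 3 → ℝ) → Fin 3 → Fin 3 → ℝ)
    (hP : ContDiff ℝ 1 P) :
    ∀ x : Fin 3 → ℝ, msym (MCurl P x) = msym (MCurl (fun y => mdev (P y)) x) := by
  intro x
  have hd : ∀ i j, Differentiable ℝ (fun y => P y i j) := fun i j =>
    differentiable_pi.mp (differentiable_pi.mp (hP.differentiable one_ne_zero) i) j
  have hg : Differentiable ℝ (fun y => mtrace (P y) / 3) := by
    have h3 : Differentiable ℝ (fun y => mtrace (P y)) :=
      ((hd 0 0).add (hd 1 1)).add (hd 2 2)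
    fun_prop
  have key : ∀ (k i m : Fin 3), pd k (fun y => mdev (P y) i m) x
      = pd k (fun y => P y i m) x
        - (if i = m then (1:ℝ) else 0) * pd k (fun y => mtrace (P y) / 3) x := by
    intro k i m
    unfold mdev
    by_cases h : i = m
    · simp only [h, if_true, mul_one, one_mul]
      exact pd_sub _ _ x k (hd m m) hg
    · simp [h]
  funext i j
  fin_cases i <;> fin_cases j <;>
    · show (_ + _) / 2 = (_ + _) / 2
      unfold MCurl vcurl
      beta_reduce
      simp only [key]
      simp
      try ring
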